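/- Every rational number a ∉ {0, 1, −1} can be written uniquely as a = (−1)^ε · (b² · 2^δ · T)^{2^d} where ε, δ ∈ {0,1}, b ∈ ℚ^×, d ≥ 0 is an integer, not both δ = 0 and T = 1, and T is a squarefree integer of the form T = ∏_{pᵢ ≡ 1 (4)} pᵢ · ∏_{qⱼ ≡ 3 (4)} (−qⱼ) for distinct odd primes pᵢ, qⱼ. -/

import Mathlib

section Aux

lemma ratsq_int {q : ℚ} {M : ℤ} (h : q ^ 2 = (M : ℚ)) : ∃ j : ℤ, M = j ^ 2 := by
  have hd : q.den ^ 2 = 1 := by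
    have := congrArg Rat.den h
    simpa [Rat.den_pow] using this
  have hd1 : q.den = 1 := by nlinarith [q.pos]
  refine ⟨q.num, ?_⟩
  have hq : (q.num : ℚ) = q := Rat.coe_int_num_of_den_eq_one hd1
  have : ((q.num ^ 2 : ℤ) : ℚ) = (M : ℚ) := by push_cast [hq]; linarith [h]
  exact_mod_cast this.symm

lemma key_TT' {T T' i : ℤ} (hT : Squarefree T) (hT' : Squarefree T')
    (h4 : T % 4 = 1) (h4' : T' % 4 = 1) {σ : ℤ} (hσ : σ = 1 ∨ σ = -1)
    (h : σ * (T * T') = i ^ 2) : T = T' := by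
  have hT0 : T ≠ 0 := by omega
  set g : ℤ := (Int.gcd T T' : ℤ) with hg_def
  have hg : 0 < g := by
    have h0 : 0 < Int.gcd T T' := Int.gcd_pos_of_ne_zero_left T' hT0
    rw [hg_def]; exact_mod_cast h0
  have hu : T = g * (T / g) := (Int.mul_ediv_cancel' (Int.gcd_dvd_left T T')).symm
  have hv : T' = g * (T' / g) := (Int.mul_ediv_cancel' (Int.gcd_dvd_right T T')).symm
  set u := T / g
  set v := T' / g
  have hcop : Int.gcd u v = 1 := Int.gcd_div_gcd_div_gcd (Int.natCast_pos.mp hg)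
  have hg2 : g ^ 2 * (σ * (u * v)) = i ^ 2 := by rw [hu, hv] at h; linarith [h]
  have hgi : g ∣ i := (Int.pow_dvd_pow_iff two_ne_zero).mp ⟨σ * (u * v), hg2.symm⟩
  obtain ⟨w, hw⟩ := hgi
  have huv : σ * (u * v) = w ^ 2 := by
    have hgne : (g:ℤ) ^ 2 ≠ 0 := pow_ne_zero 2 (by omega)
    apply mul_left_cancel₀ hgne
    rw [hg2, hw]; ring
  have hsu : Squarefree u := Squarefree.squarefree_of_dvd ⟨g, by rw [hu]; ring⟩ hT
  have hsv : Squarefree v := Squarefree.squarefree_of_dvd ⟨g, by rw [hv]; ring⟩ hT'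
  have hrel : IsRelPrime u v := (Int.isCoprime_iff_gcd_eq_one.mpr hcop).isRelPrime
  have hsuv : Squarefree (u * v) := squarefree_mul_iff.mpr ⟨hrel, hsu, hsv⟩
  have huvσ : u * v = σ * w ^ 2 := by rcases hσ with h1 | h1 <;> subst h1 <;> linarith [huv]
  have hwu : IsUnit w := hsuv w ⟨σ, by rw [huvσ]; ring⟩
  have hw1 : w = 1 ∨ w = -1 := Int.isUnit_iff.mp hwu
  have huv1 : u * v = σ := by rcases hw1 with h1 | h1 <;> rw [huvσ, h1] <;> ring
  have hUu : IsUnit u :=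
    isUnit_of_mul_isUnit_left (by rw [huv1]; rcases hσ with h1|h1 <;> simp [h1])
  have hUv : IsUnit v :=
    isUnit_of_mul_isUnit_right (by rw [huv1]; rcases hσ with h1|h1 <;> simp [h1])
  have hu1 : u = 1 ∨ u = -1 := Int.isUnit_iff.mp hUu
  have hv1 : v = 1 ∨ v = -1 := Int.isUnit_iff.mp hUv
  rcases hu1 with h1|h1 <;> rcases hv1 with h2|h2 <;> rw [h1] at hu <;> rw [h2] at hv <;> omega

lemma core_d0 {δ δ' : ℕ} {T T' : ℤ} {b b' : ℚ}
    (hδ : δ ≤ 1) (hδ' : δ' ≤ 1) (hoT : Odd T) (hoT' : Odd T')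
    (hsT : Squarefree T) (hsT' : Squarefree T')
    (h4T : T % 4 = 1) (h4T' : T' % 4 = 1)
    (hb : b ≠ 0) (hb' : b' ≠ 0) {σ : ℤ} (hσ : σ = 1 ∨ σ = -1)
    (hE : (σ : ℚ) * (b ^ 2 * 2 ^ δ * T) = b' ^ 2 * 2 ^ δ' * T') :
    δ = δ' ∧ T = T' ∧ σ = 1 := by
  have hT0 : T ≠ 0 := by omega
  have hT0' : T' ≠ 0 := by omega
  have hTQ : ((T:ℚ)) ≠ 0 := Int.cast_ne_zero.mpr hT0
  have hTQ' : ((T':ℚ)) ≠ 0 := Int.cast_ne_zero.mpr hT0'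
  set q : ℚ := b' * 2 ^ δ' * T' / b with hq_def
  have hnum : (b' * 2 ^ δ' * (T':ℚ)) ^ 2
      = ((σ:ℚ) * 2 ^ (δ + δ') * ((T:ℚ) * (T':ℚ))) * b ^ 2 := by
    linear_combination (-(2:ℚ) ^ δ' * (T':ℚ)) * hE
  have hq2 : q ^ 2 = ((σ * 2 ^ (δ + δ') * (T * T') : ℤ) : ℚ) := by
    push_cast
    rw [hq_def, div_pow, hnum, mul_div_assoc, div_self (pow_ne_zero 2 hb), mul_one]
  obtain ⟨j, hj⟩ := ratsq_int hq2
  have hq0 : q ≠ 0 := by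
    rw [hq_def]
    apply div_ne_zero _ hb
    exact mul_ne_zero (mul_ne_zero hb' (by positivity)) hTQ'
  have hMpos : 0 < σ * 2 ^ (δ + δ') * (T * T') := by
    have h1 : (0:ℚ) < q ^ 2 := by positivity
    rw [hq2] at h1
    exact_mod_cast h1
  have hj0 : j ≠ 0 := by rintro rfl; simp at hj; omega
  have hoTT : (T * T') % 2 = 1 := Int.odd_iff.mp (hoT.mul hoT')
  have hδδ : δ = δ' := by
    by_contra hne
    have h1 : δ + δ' = 1 := by omega
    rw [h1] at hj
    have h2j : (2:ℤ) ∣ j := by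
      apply Int.prime_two.dvd_of_dvd_pow (n := 2)
      exact ⟨σ * (T * T'), by rw [← hj]; ring⟩
    obtain ⟨m, hm⟩ := h2j
    have hmm : 2 * m ^ 2 = σ * (T * T') := by rw [hm] at hj; nlinarith [hj]
    have h2d : (2:ℤ) ∣ T * T' := by
      rcases hσ with h1|h1 <;> rw [h1] at hmm
      exacts [⟨m ^ 2, by linarith⟩, ⟨-(m ^ 2), by linarith⟩]
    omega
  subst hδδ
  have h2δ : ((2:ℤ) ^ δ) ≠ 0 := by positivity
  have hdvd : (2:ℤ) ^ δ ∣ j := by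
    apply (Int.pow_dvd_pow_iff (n := 2) (by norm_num)).mp
    exact ⟨σ * (T * T'), by rw [← hj]; ring⟩
  obtain ⟨w, hw⟩ := hdvd
  have hw2 : σ * (T * T') = w ^ 2 := by
    apply mul_left_cancel₀ (pow_ne_zero 2 h2δ)
    calc ((2:ℤ) ^ δ) ^ 2 * (σ * (T * T')) = σ * 2 ^ (δ + δ) * (T * T') := by ring
      _ = j ^ 2 := hj
      _ = ((2:ℤ) ^ δ) ^ 2 * w ^ 2 := by rw [hw]; ring
  have hTT : T = T' := key_TT' hsT hsT' h4T h4T' hσ hw2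
  subst hTT
  have hcancel : (σ:ℚ) * b ^ 2 = b' ^ 2 := by
    have h2 : ((σ:ℚ) * b ^ 2) * (2 ^ δ * T) = (b' ^ 2) * (2 ^ δ * T) := by
      linear_combination hE
    exact mul_right_cancel₀ (mul_ne_zero (by positivity) hTQ) h2
  have hσ1 : σ = 1 := by
    rcases hσ with h1 | h1
    · exact h1
    · exfalso
      rw [h1] at hcancel
      push_cast at hcancel
      nlinarith [pow_pos (abs_pos.mpr hb) 2, pow_pos (abs_pos.mpr hb') 2, sq_abs b, sq_abs b']
  exact ⟨rfl, rfl, hσ1⟩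

lemma not_sq {δ : ℕ} {T : ℤ} {b : ℚ} (hδ : δ ≤ 1) (hodd : Odd T) (hsf : Squarefree T)
    (h4 : T % 4 = 1) (hne : ¬(δ = 0 ∧ T = 1)) (hb : b ≠ 0) (r : ℚ) :
    r ^ 2 ≠ |b ^ 2 * 2 ^ δ * (T : ℚ)| := by
  intro h
  have hT0 : T ≠ 0 := by omega
  have habs : |b ^ 2 * 2 ^ δ * (T : ℚ)| = b ^ 2 * 2 ^ δ * ((|T| : ℤ) : ℚ) := by
    rw [abs_mul, abs_mul, abs_of_nonneg (sq_nonneg b),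
      abs_of_nonneg (by positivity : (0:ℚ) ≤ 2 ^ δ)]
    push_cast [Int.cast_abs]
    ring
  have hq : (r / b) ^ 2 = ((2 ^ δ * |T| : ℤ) : ℚ) := by
    rw [div_pow]
    rw [habs] at h
    rw [h]
    field_simp
    push_cast
    ring
  obtain ⟨j, hj⟩ := ratsq_int hq
  have hTodd : T % 2 = 1 := Int.odd_iff.mp hodd
  have habsT : |T| = T ∨ |T| = -T := abs_choice T
  interval_cases δ
  · have hj' : |T| = j ^ 2 := by omega
    have hsfa : Squarefree |T| := by
      rcases habsT with h1 | h1 <;> rw [h1]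
      · exact hsf
      · exact Squarefree.squarefree_of_dvd (neg_dvd.mpr dvd_rfl) hsf
    have : IsUnit j := hsfa j ⟨1, by rw [hj']; ring⟩
    have : j = 1 ∨ j = -1 := Int.isUnit_iff.mp this
    have : |T| = 1 := by rcases this with h1|h1 <;> rw [h1] at hj' <;> omega
    have : T = 1 := by omega
    exact hne ⟨rfl, this⟩
  · have h2j : (2:ℤ) ∣ j := by
      have : (2:ℤ) ∣ j ^ 2 := ⟨|T|, by omega⟩
      exact Int.prime_two.dvd_of_dvd_pow this
    obtain ⟨m, hm⟩ := h2j
    have hm2 : |T| = 2 * m ^ 2 := by rw [hm] at hj; nlinarith [hj]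
    omega

end Aux

/-- The decomposition data `(ε, δ, d, T)` of a rational `a ∉ {0, 1, -1}`:
`a = (-1)^ε (b² 2^δ T)^{2^d}` with `ε, δ ∈ {0,1}`, `d ≥ 0`, `b ∈ ℚ^×`, not both `δ = 0` and
`T = 1`, and `T` a squarefree odd integer with `T ≡ 1 (mod 4)` (equivalently, `T` is a
product of distinct primes `pᵢ ≡ 1 (mod 4)` times a product of `-qⱼ` with `qⱼ ≡ 3 (mod 4)`
distinct primes). -/
def IsIndexDecomposition (a : ℚ) (ε δ d : ℕ) (T : ℤ) : Prop :=
  ε ≤ 1 ∧ δ ≤ 1 ∧ Odd T ∧ Squarefree T ∧ T % 4 = 1 ∧ ¬ (δ = 0 ∧ T = 1) ∧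
    ∃ b : ℚ, b ≠ 0 ∧ a = (-1) ^ ε * ((b ^ 2 * 2 ^ δ * T) ^ (2 ^ d))

section Measure

def Qm (a : ℚ) : ℕ := a.num.natAbs * a.den

lemma Qm_sq (r : ℚ) : Qm (r ^ 2) = Qm r ^ 2 := by
  simp [Qm, Rat.num_pow, Rat.den_pow, Int.natAbs_pow]; ring

lemma Qm_ne_zero {r : ℚ} (h : r ≠ 0) : Qm r ≠ 0 := by
  simp [Qm, Rat.num_ne_zero.mpr h, r.den_nz]

lemma Qm_eq_one {r : ℚ} (h : Qm r = 1) : r = 1 ∨ r = -1 := by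
  have h1 : r.num.natAbs = 1 ∧ r.den = 1 := by
    constructor <;>
      nlinarith [Qm, r.pos, h, Nat.eq_one_of_mul_eq_one_left (by simpa [Qm] using h),
        Nat.eq_one_of_mul_eq_one_right (by simpa [Qm] using h)]
  have hq : (r.num : ℚ) = r := Rat.coe_int_num_of_den_eq_one h1.2
  have : r.num = 1 ∨ r.num = -1 := by omega
  rcases this with h | h <;> [left; right] <;> rw [← hq, h] <;> norm_num

lemma Qm_abs (a : ℚ) : Qm |a| = Qm a := by
  rcases abs_choice a with h | h <;> rw [h] <;> simp [Qm]

end Measure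

lemma exist_aux : ∀ N : ℕ, ∀ a : ℚ, Qm a ≤ N → a ≠ 0 → a ≠ 1 → a ≠ -1 →
    ∃ ε δ d : ℕ, ∃ T : ℤ, IsIndexDecomposition a ε δ d T := by
  intro N
  induction N using Nat.strong_induction_on with
  | _ N IH =>
  intro a hm ha0 ha1 ham1
  have hane : |a| ≠ 1 := by
    intro h
    rcases (abs_eq (le_of_lt one_pos)).mp h with h1 | h1 <;> [exact ha1 h1; exact ham1 h1]
  by_cases hsq : ∃ r : ℚ, 0 ≤ r ∧ r ^ 2 = |a|
  · obtain ⟨r, hr0, hr2⟩ := hsq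
    have hrne : r ≠ 0 := by
      rintro rfl
      rw [eq_comm, pow_two, zero_mul, abs_eq_zero] at hr2
      exact ha0 hr2
    have hr1 : r ≠ 1 := by rintro rfl; rw [one_pow] at hr2; exact hane hr2.symm
    have hrm1 : r ≠ -1 := by rintro rfl; norm_num at hr0
    have hQa : Qm a = Qm r ^ 2 := by rw [← Qm_abs a, ← hr2, Qm_sq]
    have hQr2 : 2 ≤ Qm r := by
      have h0 := Qm_ne_zero hrne
      have h1 : Qm r ≠ 1 := fun h => by rcases Qm_eq_one h with h' | h' <;> tauto
      omega
    have hlt : Qm r < N := by nlinarith [hm, hQa]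
    obtain ⟨ε₁, δ₁, d₁, T₁, hε₁, hδ₁, hoT, hsT, h4T, hneT, b, hb, heq⟩ :=
      IH (Qm r) hlt r le_rfl hrne hr1 hrm1
    have hrsq : r ^ 2 = (b ^ 2 * 2 ^ δ₁ * (T₁:ℚ)) ^ 2 ^ (d₁ + 1) := by
      have h2 : r ^ 2 = ((b ^ 2 * 2 ^ δ₁ * (T₁:ℚ)) ^ 2 ^ d₁) ^ 2 := by
        rw [heq]; interval_cases ε₁ <;> ring
      rw [h2, ← pow_mul, ← pow_succ]
    rcases le_or_gt 0 a with hpos | hneg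
    · refine ⟨0, δ₁, d₁ + 1, T₁, by norm_num, hδ₁, hoT, hsT, h4T, hneT, b, hb, ?_⟩
      rw [pow_zero, one_mul, ← hrsq, hr2, abs_of_nonneg hpos]
    · refine ⟨1, δ₁, d₁ + 1, T₁, le_rfl, hδ₁, hoT, hsT, h4T, hneT, b, hb, ?_⟩
      rw [← hrsq, hr2, abs_of_neg hneg]; ring
  · have hn0 : a.num ≠ 0 := Rat.num_ne_zero.mpr ha0
    have hd0 : 0 < (a.den : ℤ) := by exact_mod_cast a.pos
    obtain ⟨s, k, hks, hsfs⟩ := Nat.sq_mul_squarefree (a.num * (a.den : ℤ)).natAbs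
    have hprod0 : a.num * (a.den : ℤ) ≠ 0 := mul_ne_zero hn0 (by omega)
    have hna : (a.num * (a.den : ℤ)).natAbs ≠ 0 := Int.natAbs_ne_zero.mpr hprod0
    have hk0 : k ≠ 0 := by rintro rfl; simp at hks; omega
    have hs0 : s ≠ 0 := by rintro rfl; simp at hks; omega
    have hcast : (k : ℤ) ^ 2 * (s : ℤ) = |a.num * (a.den : ℤ)| := by
      rw [Int.abs_eq_natAbs, ← hks]; push_cast; ring
    set S : ℤ := if 0 < a.num then (s : ℤ) else -(s : ℤ) with hS_def
    have hSsf : Squarefree S := by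
      rw [hS_def]
      split
      · exact Int.squarefree_natCast.mpr hsfs
      · exact Squarefree.squarefree_of_dvd (neg_dvd.mpr dvd_rfl)
          (Int.squarefree_natCast.mpr hsfs)
    have hS0 : S ≠ 0 := by rw [hS_def]; split <;> simpa using hs0
    have hSsign : (k : ℤ) ^ 2 * S = a.num * (a.den : ℤ) := by
      rw [hS_def]
      rcases lt_trichotomy a.num 0 with h | h | h
      · rw [if_neg (by omega)]
        have habs : |a.num * (a.den : ℤ)| = -(a.num * a.den) :=
          abs_of_neg (mul_neg_of_neg_of_pos h hd0)
        nlinarith [hcast, habs]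
      · omega
      · rw [if_pos h]
        have habs : |a.num * (a.den : ℤ)| = a.num * a.den := abs_of_pos (by positivity)
        rw [hcast, habs]
    set b : ℚ := (k : ℚ) / (a.den : ℚ) with hb_def
    have hbne : b ≠ 0 := by
      rw [hb_def]
      exact div_ne_zero (by exact_mod_cast hk0) (by exact_mod_cast a.den_nz)
    have hkey : a = b ^ 2 * (S : ℚ) := by
      have h3 : a * (a.den : ℚ) = (a.num : ℚ) := by
        nth_rewrite 1 [← Rat.num_div_den a]
        rw [div_mul_cancel₀]
        exact_mod_cast (Nat.cast_ne_zero (R := ℚ)).mpr a.den_nz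
      have h2 : ((k:ℚ)) ^ 2 * (S : ℚ) = a * a.den * a.den := by
        have h1 := congrArg (fun z : ℤ => (z : ℚ)) hSsign
        push_cast at h1
        rw [← h3] at h1; linarith
      rw [hb_def, div_pow, div_mul_eq_mul_div,
        eq_div_iff (by positivity : ((a.den:ℚ))^2 ≠ 0)]
      linear_combination -h2
    have habs_not : ∀ u : ℚ, 0 ≤ u → u ^ 2 ≠ |a| := fun u hu h => hsq ⟨u, hu, h⟩
    have main : ∃ δ : ℕ, ∃ t : ℤ, δ ≤ 1 ∧ Odd t ∧ Squarefree t ∧ S = 2 ^ δ * t := by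
      by_cases h2 : (2:ℤ) ∣ S
      · obtain ⟨t, ht⟩ := h2
        have hodd : ¬ (2:ℤ) ∣ t := by
          rintro ⟨c, hc⟩
          have := hSsf 2 ⟨c, by omega⟩
          rw [Int.isUnit_iff] at this
          omega
        exact ⟨1, t, le_rfl, Int.odd_iff.mpr (by omega),
          Squarefree.squarefree_of_dvd ⟨2, by omega⟩ hSsf, by omega⟩
      · exact ⟨0, S, by omega, Int.odd_iff.mpr (by omega), hSsf, by omega⟩
    obtain ⟨δ, t, hδ, hto, hts, hSt⟩ := main
    have ht4 : t % 4 = 1 ∨ t % 4 = 3 := by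
      have := Int.odd_iff.mp hto; omega
    have habs_ne : ¬ (δ = 0 ∧ (t = 1 ∨ t = -1)) := by
      rintro ⟨hδ0, ht1⟩
      have hS1 : S = t := by rw [hSt, hδ0]; ring
      have hb2 : |b| ^ 2 = |a| := by
        rcases ht1 with h1 | h1
        · have ha' : a = b ^ 2 := by rw [hkey, hS1, h1]; push_cast; ring
          rw [ha', abs_of_nonneg (by positivity : (0:ℚ) ≤ b ^ 2), sq_abs]
        · have ha' : a = -(b ^ 2) := by rw [hkey, hS1, h1]; push_cast; ring
          rw [ha', abs_neg, abs_of_nonneg (by positivity : (0:ℚ) ≤ b ^ 2), sq_abs]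
      exact habs_not |b| (abs_nonneg b) hb2
    rcases ht4 with h4 | h4
    · refine ⟨0, δ, 0, t, by omega, hδ, hto, hts, h4, ?_, b, hbne, ?_⟩
      · rintro ⟨h1, h2⟩; exact habs_ne ⟨h1, Or.inl h2⟩
      · simp only [pow_zero, pow_one, one_mul]
        rw [hkey, hSt]; push_cast; ring
    · refine ⟨1, δ, 0, -t, le_rfl, hδ, hto.neg,
        Squarefree.squarefree_of_dvd (neg_dvd.mpr dvd_rfl) hts, by omega, ?_, b, hbne, ?_⟩
      · rintro ⟨h1, h2⟩; exact habs_ne ⟨h1, Or.inr (by omega)⟩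
      · simp only [pow_zero, pow_one]
        rw [hkey, hSt]; push_cast; ring

lemma uniq_aux : ∀ N : ℕ, ∀ a : ℚ, Qm a ≤ N → a ≠ 0 → a ≠ 1 → a ≠ -1 →
    ∀ ε δ d : ℕ, ∀ T : ℤ, ∀ ε' δ' d' : ℕ, ∀ T' : ℤ,
    IsIndexDecomposition a ε δ d T → IsIndexDecomposition a ε' δ' d' T' →
    ε = ε' ∧ δ = δ' ∧ d = d' ∧ T = T' := by
  intro N
  induction N using Nat.strong_induction_on with
  | _ N IH =>
  intro a hm ha0 ha1 ham1 ε δ d T ε' δ' d' T' hx hy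
  obtain ⟨hε, hδ, hoT, hsT, h4T, hneT, b, hb, heq⟩ := hx
  obtain ⟨hε', hδ', hoT', hsT', h4T', hneT', b', hb', heq'⟩ := hy
  have hane : |a| ≠ 1 := by
    intro h
    rcases (abs_eq (le_of_lt one_pos)).mp h with h1 | h1 <;> [exact ha1 h1; exact ham1 h1]
  have hT0 : T ≠ 0 := by omega
  have hT0' : T' ≠ 0 := by omega
  have hc0 : (b ^ 2 * 2 ^ δ * (T:ℚ)) ≠ 0 :=
    mul_ne_zero (mul_ne_zero (pow_ne_zero 2 hb) (by positivity)) (Int.cast_ne_zero.mpr hT0)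
  have hc0' : (b' ^ 2 * 2 ^ δ' * (T':ℚ)) ≠ 0 :=
    mul_ne_zero (mul_ne_zero (pow_ne_zero 2 hb') (by positivity)) (Int.cast_ne_zero.mpr hT0')
  have habs : |a| = |b ^ 2 * 2 ^ δ * (T:ℚ)| ^ 2 ^ d := by
    rw [heq, abs_mul, abs_pow, abs_pow, abs_neg, abs_one, one_pow, one_mul]
  have habs' : |a| = |b' ^ 2 * 2 ^ δ' * (T':ℚ)| ^ 2 ^ d' := by
    rw [heq', abs_mul, abs_pow, abs_pow, abs_neg, abs_one, one_pow, one_mul]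
  cases d with
  | zero =>
    cases d' with
    | zero =>
      simp only [pow_zero, pow_one] at heq heq'
      interval_cases ε <;> interval_cases ε' <;> norm_num at heq heq'
      · have hE : (((1:ℤ)):ℚ) * (b ^ 2 * 2 ^ δ * T) = b' ^ 2 * 2 ^ δ' * T' := by
          push_cast; linarith [heq, heq']
        obtain ⟨h1, h2, _⟩ := core_d0 hδ hδ' hoT hoT' hsT hsT' h4T h4T' hb hb' (Or.inl rfl) hE
        exact ⟨rfl, h1, rfl, h2⟩
      · have hE : (((-1:ℤ)):ℚ) * (b ^ 2 * 2 ^ δ * T) = b' ^ 2 * 2 ^ δ' * T' := by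
          push_cast; linarith [heq, heq']
        obtain ⟨_, _, h3⟩ := core_d0 hδ hδ' hoT hoT' hsT hsT' h4T h4T' hb hb' (Or.inr rfl) hE
        exact absurd h3 (by norm_num)
      · have hE : (((-1:ℤ)):ℚ) * (b ^ 2 * 2 ^ δ * T) = b' ^ 2 * 2 ^ δ' * T' := by
          push_cast; linarith [heq, heq']
        obtain ⟨_, _, h3⟩ := core_d0 hδ hδ' hoT hoT' hsT hsT' h4T h4T' hb hb' (Or.inr rfl) hE
        exact absurd h3 (by norm_num)
      · have hE : (((1:ℤ)):ℚ) * (b ^ 2 * 2 ^ δ * T) = b' ^ 2 * 2 ^ δ' * T' := by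
          push_cast; linarith [heq, heq']
        obtain ⟨h1, h2, _⟩ := core_d0 hδ hδ' hoT hoT' hsT hsT' h4T h4T' hb hb' (Or.inl rfl) hE
        exact ⟨rfl, h1, rfl, h2⟩
    | succ e' =>
      exfalso
      have h1 : (|b' ^ 2 * 2 ^ δ' * (T':ℚ)| ^ 2 ^ e') ^ 2 = |b ^ 2 * 2 ^ δ * (T:ℚ)| := by
        rw [← pow_mul, ← pow_succ, ← habs', habs, pow_zero, pow_one]
      exact not_sq hδ hoT hsT h4T hneT hb _ h1
  | succ e =>
    cases d' with
    | zero =>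
      exfalso
      have h1 : (|b ^ 2 * 2 ^ δ * (T:ℚ)| ^ 2 ^ e) ^ 2 = |b' ^ 2 * 2 ^ δ' * (T':ℚ)| := by
        rw [← pow_mul, ← pow_succ, ← habs, habs', pow_zero, pow_one]
      exact not_sq hδ' hoT' hsT' h4T' hneT' hb' _ h1
    | succ e' =>
      have hr2 : (|b ^ 2 * 2 ^ δ * (T:ℚ)| ^ 2 ^ e) ^ 2 = |a| := by
        rw [habs, ← pow_mul, ← pow_succ]
      have hr2' : (|b' ^ 2 * 2 ^ δ' * (T':ℚ)| ^ 2 ^ e') ^ 2 = |a| := by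
        rw [habs', ← pow_mul, ← pow_succ]
      set r := |b ^ 2 * 2 ^ δ * (T:ℚ)| ^ 2 ^ e with hr_def
      set r' := |b' ^ 2 * 2 ^ δ' * (T':ℚ)| ^ 2 ^ e' with hr'_def
      have hrpos : 0 < r := pow_pos (abs_pos.mpr hc0) _
      have hrpos' : 0 < r' := pow_pos (abs_pos.mpr hc0') _
      have hrr' : r = r' := by
        have h2 : r ^ 2 = r' ^ 2 := by rw [hr2, hr2']
        have hle : r ≤ r' := by nlinarith
        have hge : r' ≤ r := by nlinarith
        linarith
      have hrne1 : r ≠ 1 := fun h => hane (by rw [← hr2, h]; norm_num)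
      have hQa : Qm a = Qm r ^ 2 := by rw [← Qm_abs a, ← hr2, Qm_sq]
      have hQr2 : 2 ≤ Qm r := by
        have h0 := Qm_ne_zero (ne_of_gt hrpos)
        have h1 : Qm r ≠ 1 := fun h => by
          rcases Qm_eq_one h with h' | h'
          · exact hrne1 h'
          · rw [h'] at hrpos; norm_num at hrpos
        omega
      have hlt : Qm r < N := by nlinarith [hm, hQa]
      obtain ⟨ε₂, hε₂, hreq⟩ : ∃ ε₂ : ℕ, ε₂ ≤ 1 ∧
          r = (-1) ^ ε₂ * (b ^ 2 * 2 ^ δ * (T:ℚ)) ^ 2 ^ e := by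
        rcases le_or_gt 0 ((b ^ 2 * 2 ^ δ * (T:ℚ)) ^ 2 ^ e) with h | h
        · exact ⟨0, by norm_num, by
            rw [hr_def, ← abs_pow, abs_of_nonneg h]; norm_num⟩
        · exact ⟨1, le_rfl, by rw [hr_def, ← abs_pow, abs_of_neg h]; ring⟩
      obtain ⟨ε₂', hε₂', hreq'⟩ : ∃ ε₂' : ℕ, ε₂' ≤ 1 ∧
          r = (-1) ^ ε₂' * (b' ^ 2 * 2 ^ δ' * (T':ℚ)) ^ 2 ^ e' := by
        rcases le_or_gt 0 ((b' ^ 2 * 2 ^ δ' * (T':ℚ)) ^ 2 ^ e') with h | h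
        · exact ⟨0, by norm_num, by
            rw [hrr', hr'_def, ← abs_pow, abs_of_nonneg h]; norm_num⟩
        · exact ⟨1, le_rfl, by rw [hrr', hr'_def, ← abs_pow, abs_of_neg h]; ring⟩
      obtain ⟨_, hδδ, hee, hTT⟩ :=
        IH (Qm r) hlt r le_rfl (ne_of_gt hrpos) hrne1
          (fun h => by rw [h] at hrpos; norm_num at hrpos)
          ε₂ δ e T ε₂' δ' e' T'
          ⟨hε₂, hδ, hoT, hsT, h4T, hneT, b, hb, hreq⟩
          ⟨hε₂', hδ', hoT', hsT', h4T', hneT', b', hb', hreq'⟩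
      refine ⟨?_, hδδ, by omega, hTT⟩
      have hXpos : 0 < (b ^ 2 * 2 ^ δ * (T:ℚ)) ^ 2 ^ (e + 1) := by
        have h2 : (b ^ 2 * 2 ^ δ * (T:ℚ)) ^ 2 ^ (e + 1)
            = ((b ^ 2 * 2 ^ δ * (T:ℚ)) ^ 2 ^ e) ^ 2 := by rw [← pow_mul, pow_succ 2 e]
        rw [h2]
        exact lt_of_le_of_ne (sq_nonneg _) (Ne.symm (pow_ne_zero 2 (pow_ne_zero _ hc0)))
      have hXpos' : 0 < (b' ^ 2 * 2 ^ δ' * (T':ℚ)) ^ 2 ^ (e' + 1) := by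
        have h2 : (b' ^ 2 * 2 ^ δ' * (T':ℚ)) ^ 2 ^ (e' + 1)
            = ((b' ^ 2 * 2 ^ δ' * (T':ℚ)) ^ 2 ^ e') ^ 2 := by rw [← pow_mul, pow_succ 2 e']
        rw [h2]
        exact lt_of_le_of_ne (sq_nonneg _) (Ne.symm (pow_ne_zero 2 (pow_ne_zero _ hc0')))
      interval_cases ε <;> interval_cases ε' <;> norm_num at heq heq' ⊢ <;>
        linarith [hXpos, hXpos']

theorem stmt_10 (a : ℚ) (ha0 : a ≠ 0) (ha1 : a ≠ 1) (ham1 : a ≠ -1) :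
    ∃! x : ℕ × ℕ × ℕ × ℤ, IsIndexDecomposition a x.1 x.2.1 x.2.2.1 x.2.2.2 := by
  obtain ⟨ε, δ, d, T, h⟩ := exist_aux (Qm a) a le_rfl ha0 ha1 ham1
  refine ⟨(ε, δ, d, T), h, ?_⟩
  rintro ⟨ε', δ', d', T'⟩ h'
  obtain ⟨h1, h2, h3, h4⟩ :=
    uniq_aux (Qm a) a le_rfl ha0 ha1 ham1 ε' δ' d' T' ε δ d T h' h
  simp only [Prod.mk.injEq]
  exact ⟨h1, h2, h3, h4⟩
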